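/- arXiv:1501.07587 — 2 statements merged into one kernel-verified Lean document; each statement's English description precedes it below -/
import Mathlib

section
/- Let O be a discrete valuation ring with maximal ideal p and fraction field F, and let n ≥ 1. For g ∈ GL_n(F), let η·g ∈ F^n denote the last row of g, where η = (0,…,0,1). Then g belongs to the product set P_n · GL_n(O) (with P_n = {h ∈ GL_n(F) : η·h = η} the mirabolic subgroup) if and only if the last row of g lies in O^n but not in p^n (i.e., it is a primitive vector of O^n). -/
open Matrix

/-- The last-coordinate row vector η = (0,…,0,1). -/
def eta (K : Type*) [Semiring K] (n : ℕ) : Fin n → K :=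
  fun i => if (i : ℕ) = n - 1 then 1 else 0

/-- The mirabolic subgroup P_n = {g ∈ GL_n(K) : η·g = η}. -/
def mirabolic (K : Type*) [Field K] (n : ℕ) : Subgroup (GL (Fin n) K) where
  carrier := {g | Matrix.vecMul (eta K n) (g : Matrix (Fin n) (Fin n) K) = eta K n}
  one_mem' := by simp [Matrix.vecMul_one]
  mul_mem' := by
    intro a b ha hb
    simp only [Set.mem_setOf_eq] at *
    rw [Units.val_mul, ← Matrix.vecMul_vecMul, ha, hb]
  inv_mem' := by
    intro a ha
    simp only [Set.mem_setOf_eq] at *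
    have : Matrix.vecMul (Matrix.vecMul (eta K n) (a : Matrix (Fin n) (Fin n) K))
        ((a⁻¹ : GL (Fin n) K) : Matrix (Fin n) (Fin n) K) = eta K n := by
      rw [Matrix.vecMul_vecMul, ← Units.val_mul, mul_inv_cancel, Units.val_one,
        Matrix.vecMul_one]
    rwa [ha] at this

lemma eta_vecMul {F : Type*} [Semiring F] {n : ℕ} (hn : 1 ≤ n)
    (B : Matrix (Fin n) (Fin n) F) :
    Matrix.vecMul (eta F n) B = B ⟨n - 1, Nat.sub_lt hn one_pos⟩ := by
  set last : Fin n := ⟨n - 1, Nat.sub_lt hn one_pos⟩ with hlast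
  funext j
  have hc : ∀ i : Fin n, ((i : ℕ) = n - 1) = (i = last) := by
    intro i; rw [Fin.ext_iff]
  simp only [Matrix.vecMul, dotProduct, eta, hc]
  rw [Finset.sum_eq_single last]
  · simp
  · intro b _ hb; simp [hb]
  · simp

/-- over the fraction field F of a DVR O, an element g of GL_n(F)
lies in P_n·GL_n(O) if and only if its last row η·g lies in O^n but not in p^n,
i.e. it is a primitive vector of O^n. -/
theorem stmt_7 (O : Type*) [CommRing O] [IsDomain O] [IsDiscreteValuationRing O]
    (F : Type*) [Field F] [Algebra O F] [IsFractionRing O F]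
    (n : ℕ) (hn : 1 ≤ n) (g : GL (Fin n) F) :
    (∃ p ∈ mirabolic F n, ∃ k : GL (Fin n) O,
        g = p * Units.map ((algebraMap O F).mapMatrix.toMonoidHom) k) ↔
      ((∀ i, ∃ a : O, algebraMap O F a =
          Matrix.vecMul (eta F n) (g : Matrix (Fin n) (Fin n) F) i) ∧
        ¬ (∀ i, ∃ a ∈ IsLocalRing.maximalIdeal O, algebraMap O F a =
          Matrix.vecMul (eta F n) (g : Matrix (Fin n) (Fin n) F) i)) := by
  set last : Fin n := ⟨n - 1, Nat.sub_lt hn one_pos⟩ with hlast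
  set φ := algebraMap O F with hφ
  have hφinj : Function.Injective φ := IsFractionRing.injective O F
  constructor
  · rintro ⟨p, hp, k, rfl⟩
    have hp' : Matrix.vecMul (eta F n) (p : Matrix (Fin n) (Fin n) F) = eta F n := hp
    have hrow : Matrix.vecMul (eta F n)
        ((p * Units.map φ.mapMatrix.toMonoidHom k : GL (Fin n) F) :
          Matrix (Fin n) (Fin n) F)
        = fun i => φ ((k : Matrix (Fin n) (Fin n) O) last i) := by
      show Matrix.vecMul (eta F n)
        ((p : Matrix (Fin n) (Fin n) F) *
          ((Units.map φ.mapMatrix.toMonoidHom k : GL (Fin n) F) :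
            Matrix (Fin n) (Fin n) F)) = _
      rw [← Matrix.vecMul_vecMul, hp', eta_vecMul hn]
      rfl
    rw [hrow]
    constructor
    · intro i; exact ⟨(k : Matrix (Fin n) (Fin n) O) last i, rfl⟩
    · intro hcon
      have hmem : ∀ i, (k : Matrix (Fin n) (Fin n) O) last i ∈
          IsLocalRing.maximalIdeal O := by
        intro i
        obtain ⟨a, ha, ha2⟩ := hcon i
        simp only [] at ha2
        rwa [hφinj ha2] at ha
      -- consider the residue field
      have hdetunit : IsUnit ((k : Matrix (Fin n) (Fin n) O).det) :=
        (Matrix.isUnit_iff_isUnit_det _).mp k.isUnit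
      set ψ := IsLocalRing.residue O with hψ
      have h0 : ψ.mapMatrix (k : Matrix (Fin n) (Fin n) O) last = 0 := by
        funext i
        exact Ideal.Quotient.eq_zero_iff_mem.mpr (hmem i)
      have hdet0 : (ψ.mapMatrix (k : Matrix (Fin n) (Fin n) O)).det = 0 :=
        Matrix.det_eq_zero_of_row_eq_zero last (fun j => congrFun h0 j)
      rw [← RingHom.map_det] at hdet0
      have : IsUnit (ψ ((k : Matrix (Fin n) (Fin n) O).det)) := hdetunit.map ψ
      rw [hdet0] at this
      exact this.ne_zero rfl
  · rintro ⟨h1, h2⟩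
    choose vO hvO using h1
    -- some coordinate of vO is a unit
    have hj : ∃ j, IsUnit (vO j) := by
      by_contra hcon
      push_neg at hcon
      apply h2
      intro i
      refine ⟨vO i, ?_, hvO i⟩
      exact (IsLocalRing.mem_maximalIdeal _).mpr (hcon i)
    obtain ⟨j, hj⟩ := hj
    set s : Equiv.Perm (Fin n) := Equiv.swap j last with hs
    set A : Matrix (Fin n) (Fin n) O :=
      Matrix.updateRow (1 : Matrix (Fin n) (Fin n) O) last (vO ∘ s) with hA
    set M : Matrix (Fin n) (Fin n) O := A.submatrix id s with hM
    -- A is lower triangular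
    have hAtri : A.BlockTriangular OrderDual.toDual := by
      intro a b hab
      have hab' : a < b := hab
      have hble : b ≤ last := by
        rw [Fin.le_def]
        exact Nat.le_sub_one_of_lt b.isLt
      have hane : a ≠ last := by
        intro h
        exact absurd (hab'.trans_le hble) (by rw [h]; exact lt_irrefl _)
      simp [hA, Matrix.updateRow_ne hane, Matrix.one_apply, hab'.ne]
    have hdetA : A.det = vO j := by
      rw [Matrix.det_of_lowerTriangular A hAtri]
      rw [Finset.prod_eq_single last]
      · simp [hA, hs, Equiv.swap_apply_right]
      · intro b _ hb
        simp [hA, Matrix.updateRow_ne hb, Matrix.one_apply]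
      · simp
    have hdetM : IsUnit M.det := by
      rw [hM, Matrix.det_permute' s A, hdetA]
      exact (IsUnit.map (Int.castRingHom O) (Equiv.Perm.sign s).isUnit).mul hj
    have hMrow : ∀ i, M last i = vO i := by
      intro i
      simp [hM, hA, hs, Matrix.updateRow_self, Equiv.swap_apply_self]
    set k : GL (Fin n) O := ((Matrix.isUnit_iff_isUnit_det M).mpr hdetM).unit with hk
    have hkval : (k : Matrix (Fin n) (Fin n) O) = M := rfl
    set kF : GL (Fin n) F := Units.map φ.mapMatrix.toMonoidHom k with hkF
    have hkFrow : Matrix.vecMul (eta F n) (kF : Matrix (Fin n) (Fin n) F)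
        = Matrix.vecMul (eta F n) (g : Matrix (Fin n) (Fin n) F) := by
      rw [eta_vecMul hn, eta_vecMul hn]
      funext i
      show φ.mapMatrix M last i = _
      rw [RingHom.mapMatrix_apply]
      show φ (M last i) = _
      rw [hMrow, hvO, eta_vecMul hn]
    refine ⟨g * kF⁻¹, ?_, k, by exact (inv_mul_cancel_right g kF).symm⟩
    show Matrix.vecMul (eta F n) ((g * kF⁻¹ : GL (Fin n) F) :
      Matrix (Fin n) (Fin n) F) = eta F n
    have : ((g * kF⁻¹ : GL (Fin n) F) : Matrix (Fin n) (Fin n) F)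
        = (g : Matrix (Fin n) (Fin n) F) *
          ((kF⁻¹ : GL (Fin n) F) : Matrix (Fin n) (Fin n) F) := rfl
    rw [this, ← Matrix.vecMul_vecMul, ← hkFrow, Matrix.vecMul_vecMul,
      ← Units.val_mul, mul_inv_cancel, Units.val_one, Matrix.vecMul_one]
end

section
/- Let F be a nonarchimedean local field with ring of integers O, uniformizer ϖ, and normalized valuation v. For x ∈ Fˣ and n ≥ 1, write diag-scalar z = x·I_n ∈ GL_n(F). Then every g ∈ GL_n(F) can be written g = p·z·k with p in the mirabolic subgroup P_n = {h : η·h = η}, z a scalar matrix, and k ∈ GL_n(O). -/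
open Matrix

lemma aux_exists_unit_factor {O : Type*} [CommRing O] [IsDomain O]
    [IsDiscreteValuationRing O] {n : ℕ} (w : Fin n → O) (hw : w ≠ 0) :
    ∃ (c : O) (v : Fin n → O) (j : Fin n),
      c ≠ 0 ∧ IsUnit (v j) ∧ ∀ l, w l = c * v l := by
  obtain ⟨c, hc⟩ := (IsPrincipalIdealRing.principal (Ideal.span (Set.range w))).principal
  rw [Ideal.submodule_span_eq] at hc
  have hdvd : ∀ l, c ∣ w l := by
    intro l
    have : w l ∈ Ideal.span (Set.range w) := Ideal.subset_span ⟨l, rfl⟩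
    rw [hc, Ideal.mem_span_singleton] at this
    exact this
  choose v hv using hdvd
  have hc0 : c ≠ 0 := by
    rintro rfl
    apply hw
    funext l
    simpa using hv l
  have hcmem : c ∈ Ideal.span (Set.range w) := by
    rw [hc]; exact Ideal.mem_span_singleton_self c
  rw [← Ideal.submodule_span_eq, Submodule.mem_span_range_iff_exists_fun] at hcmem
  obtain ⟨a, ha⟩ := hcmem
  have hsum : (∑ l, a l * v l) = 1 := by
    refine mul_left_cancel₀ hc0 ?_
    calc c * ∑ l, a l * v l = ∑ l, a l * (c * v l) := by
          rw [Finset.mul_sum]; exact Finset.sum_congr rfl fun l _ => by ring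
      _ = ∑ l, a l • w l := Finset.sum_congr rfl fun l _ => by rw [hv l, smul_eq_mul]
      _ = c * 1 := by rw [ha, mul_one]
  have hj : ∃ j, IsUnit (v j) := by
    by_contra h
    push_neg at h
    have h1 : (1 : O) ∈ IsLocalRing.maximalIdeal O := by
      rw [← hsum]
      exact Ideal.sum_mem _ fun l _ =>
        Ideal.mul_mem_left _ _ ((IsLocalRing.mem_maximalIdeal _).2 (h l))
    exact (IsLocalRing.maximalIdeal.isMaximal O).ne_top
      (Ideal.eq_top_of_isUnit_mem _ h1 isUnit_one)
  obtain ⟨j, hj⟩ := hj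
  exact ⟨c, v, j, hc0, hj, hv⟩

lemma aux_exists_GL_row {O : Type*} [CommRing O] {n : ℕ} (hn : 1 ≤ n)
    (v : Fin n → O) (j : Fin n) (hv : IsUnit (v j)) :
    ∃ k : GL (Fin n) O,
      (k : Matrix (Fin n) (Fin n) O) ⟨n - 1, by omega⟩ = v := by
  classical
  set last : Fin n := ⟨n - 1, by omega⟩
  set σ : Equiv.Perm (Fin n) := Equiv.swap j last with hσ
  set N : Matrix (Fin n) (Fin n) O := (1 : Matrix (Fin n) (Fin n) O).updateRow last (v ∘ σ)
    with hN
  set M : Matrix (Fin n) (Fin n) O := N * σ.permMatrix O with hM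
  have hdetN : N.det = v j := by
    rw [hN, ← Matrix.cramer_transpose_apply, Matrix.transpose_one, Matrix.cramer_one]
    show (v ∘ σ) last = v j
    simp [σ, Equiv.swap_apply_right]
  have hdet : IsUnit M.det := by
    rw [hM, Matrix.det_mul, Matrix.det_permutation, hdetN]
    exact hv.mul ((Equiv.Perm.sign σ).isUnit.map (Int.castRingHom O))
  have hrow : M last = v := by
    funext l
    rw [hM, Equiv.Perm.permMatrix, PEquiv.mul_toMatrix_toPEquiv]
    show N last (σ.symm l) = v l
    rw [hN, Matrix.updateRow_self]
    show v (σ (σ.symm l)) = v l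
    rw [Equiv.apply_symm_apply]
  exact ⟨Matrix.nonsingInvUnit M hdet, hrow⟩

lemma aux_eta_single {K : Type*} [Semiring K] {n : ℕ} (hn : 1 ≤ n) :
    eta K n = Pi.single (⟨n - 1, by omega⟩ : Fin n) 1 := by
  funext i
  rw [eta, Pi.single_apply]
  congr 1
  simp [Fin.ext_iff]

/-- over a nonarchimedean local field F (fraction field of a
complete DVR O), every g ∈ GL_n(F) decomposes as g = p·z·k with p in the
mirabolic subgroup, z a scalar matrix and k ∈ GL_n(O). -/
theorem stmt_14 (O : Type*) [CommRing O] [IsDomain O] [IsDiscreteValuationRing O]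
    (F : Type*) [Field F] [Algebra O F] [IsFractionRing O F]
    (n : ℕ) (hn : 1 ≤ n) (g : GL (Fin n) F) :
    ∃ p ∈ mirabolic F n, ∃ z : Fˣ, ∃ k : GL (Fin n) O,
      g = p * Units.map (Matrix.scalar (Fin n)).toMonoidHom z *
        Units.map ((algebraMap O F).mapMatrix.toMonoidHom) k := by
  classical
  set last : Fin n := ⟨n - 1, by omega⟩ with hlast
  set r : Fin n → F := Matrix.vecMul (eta F n) (g : Matrix (Fin n) (Fin n) F) with hr
  have hr0 : r ≠ 0 := by
    intro h
    have h1 : Matrix.vecMul r ((g⁻¹ : GL (Fin n) F) : Matrix (Fin n) (Fin n) F)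
        = eta F n := by
      rw [hr, Matrix.vecMul_vecMul, ← Units.val_mul, mul_inv_cancel, Units.val_one,
        Matrix.vecMul_one]
    rw [h] at h1
    have h2 : (eta F n) last = (0 : F) := by
      rw [← h1]; simp [Matrix.zero_vecMul]
    rw [aux_eta_single hn] at h2
    simp [hlast] at h2
  -- clear denominators
  obtain ⟨b, hb⟩ := IsLocalization.exist_integer_multiples_of_finite (nonZeroDivisors O) r
  have h' : ∀ l, ∃ y : O, algebraMap O F y = algebraMap O F (b : O) * r l := by
    intro l
    obtain ⟨y, hy⟩ := hb l
    exact ⟨y, by rw [hy, Algebra.smul_def]⟩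
  choose w hw using h'
  have hinj : Function.Injective (algebraMap O F) := IsFractionRing.injective O F
  have hbF : algebraMap O F (b : O) ≠ 0 := by
    rw [map_ne_zero_iff _ hinj]
    exact nonZeroDivisors.coe_ne_zero b
  have hw0 : w ≠ 0 := by
    intro h
    apply hr0
    funext l
    have := hw l
    rw [h] at this
    simp only [Pi.zero_apply, map_zero] at this
    exact (mul_eq_zero.mp this.symm).resolve_left hbF
  obtain ⟨c, v, j, hc0, hvj, hwv⟩ := aux_exists_unit_factor w hw0
  obtain ⟨k, hk⟩ := aux_exists_GL_row hn v j hvj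
  have hcF : algebraMap O F c ≠ 0 := by rw [map_ne_zero_iff _ hinj]; exact hc0
  set zval : F := algebraMap O F c / algebraMap O F (b : O) with hzval
  have hz0 : zval ≠ 0 := div_ne_zero hcF hbF
  set z : Fˣ := Units.mk0 zval hz0 with hz
  set K : GL (Fin n) F := Units.map ((algebraMap O F).mapMatrix.toMonoidHom) k with hK
  set Z : GL (Fin n) F := Units.map (Matrix.scalar (Fin n)).toMonoidHom z with hZ
  have hrl : ∀ l, r l = zval * algebraMap O F (v l) := by
    intro l
    have h1 := hw l
    rw [hwv l, _root_.map_mul] at h1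
    rw [hzval, div_mul_eq_mul_div, eq_div_iff hbF]
    rw [h1, mul_comm]
  have hKrow : Matrix.vecMul (eta F n) (K : Matrix (Fin n) (Fin n) F)
      = fun l => algebraMap O F (v l) := by
    rw [aux_eta_single hn, Matrix.single_one_vecMul]
    funext l
    show ((algebraMap O F).mapMatrix (k : Matrix (Fin n) (Fin n) O)) last l = _
    rw [RingHom.mapMatrix_apply]
    show algebraMap O F ((k : Matrix (Fin n) (Fin n) O) last l) = _
    rw [hk]
  set p : GL (Fin n) F := g * K⁻¹ * Z⁻¹ with hp
  have hmem : p ∈ mirabolic F n := by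
    show Matrix.vecMul (eta F n) (p : Matrix (Fin n) (Fin n) F) = eta F n
    have hval : (p : Matrix (Fin n) (Fin n) F)
        = (g : Matrix (Fin n) (Fin n) F) * ((K⁻¹ : GL (Fin n) F) : Matrix (Fin n) (Fin n) F)
          * ((Z⁻¹ : GL (Fin n) F) : Matrix (Fin n) (Fin n) F) := by
      rw [hp]; rfl
    rw [hval, ← Matrix.vecMul_vecMul, ← Matrix.vecMul_vecMul]
    have step1 : Matrix.vecMul (eta F n) (g : Matrix (Fin n) (Fin n) F)
        = zval • Matrix.vecMul (eta F n) (K : Matrix (Fin n) (Fin n) F) := by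
      rw [hKrow, ← hr]
      funext l
      simpa using hrl l
    rw [step1, Matrix.smul_vecMul, Matrix.vecMul_vecMul, ← Units.val_mul, mul_inv_cancel,
      Units.val_one, Matrix.vecMul_one]
    have hZinv : ((Z⁻¹ : GL (Fin n) F) : Matrix (Fin n) (Fin n) F)
        = Matrix.scalar (Fin n) zval⁻¹ := by
      rw [hZ, ← map_inv]
      rfl
    rw [hZinv]
    funext l
    rw [Matrix.scalar_apply, Matrix.vecMul_diagonal, Pi.smul_apply, smul_eq_mul,
      mul_comm zval (eta F n l), mul_assoc, mul_inv_cancel₀ hz0, mul_one]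
  refine ⟨p, hmem, z, k, ?_⟩
  rw [hp, ← hZ, ← hK]
  group
end
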